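/- Let 𝔩_0, 𝔩_1, 𝔩_2 be positive integers with gcd(𝔩_1, 𝔩_2) = gcd(𝔩_0, 𝔩_1, 𝔩_2). Then gcd(𝔩_0·𝔩_1, 𝔩_0·𝔩_2, 𝔩_1·𝔩_2) = gcd(𝔩_0, 𝔩_1) · gcd(𝔩_0, 𝔩_2). -/

import Mathlib

/-- If `gcd(𝔩_1, 𝔩_2) = gcd(𝔩_0, 𝔩_1, 𝔩_2)`, then
`gcd(𝔩_0𝔩_1, 𝔩_0𝔩_2, 𝔩_1𝔩_2) = gcd(𝔩_0, 𝔩_1)·gcd(𝔩_0, 𝔩_2)`. -/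
theorem gcd_of_pairwise_products (l0 l1 l2 : ℕ)
    (h0 : 0 < l0) (h1 : 0 < l1) (h2 : 0 < l2)
    (h : Nat.gcd l1 l2 = Nat.gcd l0 (Nat.gcd l1 l2)) :
    Nat.gcd (l0 * l1) (Nat.gcd (l0 * l2) (l1 * l2))
      = Nat.gcd l0 l1 * Nat.gcd l0 l2 := by
  have n0 := h0.ne'
  have n1 := h1.ne'
  have n2 := h2.ne'
  have hg12 : Nat.gcd l1 l2 ≠ 0 := Nat.gcd_ne_zero_left n1
  have hg01 : Nat.gcd l0 l1 ≠ 0 := Nat.gcd_ne_zero_left n0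
  have hg02 : Nat.gcd l0 l2 ≠ 0 := Nat.gcd_ne_zero_left n0
  apply Nat.eq_of_factorization_eq
  · exact Nat.gcd_ne_zero_left (mul_ne_zero n0 n1)
  · exact mul_ne_zero hg01 hg02
  intro p
  have hp := congrArg (fun n => n.factorization p) h
  simp only [Nat.factorization_gcd n1 n2, Nat.factorization_gcd n0 hg12,
    Finsupp.inf_apply] at hp
  rw [Nat.factorization_gcd (mul_ne_zero n0 n1)
        (Nat.gcd_ne_zero_left (mul_ne_zero n0 n2)),
      Nat.factorization_gcd (mul_ne_zero n0 n2) (mul_ne_zero n1 n2),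
      Nat.factorization_mul n0 n1, Nat.factorization_mul hg01 hg02,
      Nat.factorization_mul n0 n2, Nat.factorization_mul n1 n2,
      Nat.factorization_gcd n0 n1, Nat.factorization_gcd n0 n2]
  simp only [Finsupp.inf_apply, Finsupp.add_apply]
  omega
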